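/- Let β, γ > 0, d ≥ 0, R₀ = β/(γ+d). Suppose S, I : [0,∞) → [0,1] are C¹ and satisfy I'(t) = (γ+d)·I(t)·(R₀·S(t) − 1) with R₀ ≤ 1 and S(t) ≤ 1 for all t. Then I is nonincreasing and I(t) converges as t → ∞; moreover if S'(t) = d(1−S(t)) − βI(t)S(t) + η(t) with η(t) → 0 and I(t) → 0, and d > 0, then S(t) → 1. -/

import Mathlib

open Filter Set

theorem stmt_12 (β γ d : ℝ) (hβ : 0 < β) (hγ : 0 < γ) (hd : 0 ≤ d)
    (R₀ : ℝ) (hR₀ : R₀ = β / (γ + d)) (hR : R₀ ≤ 1)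
    (S I : ℝ → ℝ)
    (hSv : ∀ t ≥ (0:ℝ), S t ∈ Set.Icc (0:ℝ) 1) (hIv : ∀ t ≥ (0:ℝ), I t ∈ Set.Icc (0:ℝ) 1)
    (hI : ∀ t ≥ (0:ℝ), HasDerivAt I ((γ + d) * I t * (R₀ * S t - 1)) t)
    (hS1 : ∀ t ≥ (0:ℝ), S t ≤ 1) :
    AntitoneOn I (Set.Ici 0) ∧ (∃ l : ℝ, Filter.Tendsto I Filter.atTop (nhds l)) ∧
    (∀ η : ℝ → ℝ,
      (∀ t ≥ (0:ℝ), HasDerivAt S (d * (1 - S t) - β * I t * S t + η t) t) →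
      Filter.Tendsto η Filter.atTop (nhds 0) →
      Filter.Tendsto I Filter.atTop (nhds 0) →
      0 < d →
      Filter.Tendsto S Filter.atTop (nhds 1)) := by
  have hγd : 0 < γ + d := by linarith
  have hR0pos : 0 < R₀ := by rw [hR₀]; positivity
  -- Part 1: antitone
  have hAnti : AntitoneOn I (Set.Ici 0) := by
    apply antitoneOn_of_deriv_nonpos (convex_Ici 0)
    · exact fun x hx => ((hI x hx).continuousAt).continuousWithinAt
    · rw [interior_Ici]
      exact fun x hx => ((hI x (le_of_lt hx)).differentiableAt).differentiableWithinAt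
    · rw [interior_Ici]
      intro x hx
      rw [(hI x (le_of_lt hx)).deriv]
      have hIx := hIv x (le_of_lt hx)
      have hSx := hSv x (le_of_lt hx)
      have h1 : R₀ * S x - 1 ≤ 0 := by nlinarith [hSx.1, hSx.2]
      have h2 : 0 ≤ (γ + d) * I x := by nlinarith [hIx.1]
      exact mul_nonpos_of_nonneg_of_nonpos h2 h1
  refine ⟨hAnti, ?_, ?_⟩
  · -- Part 2: limit exists
    set J : ℝ → ℝ := fun t => I (max t 0) with hJ
    have hJanti : Antitone J := by
      intro s t hst
      exact hAnti (le_max_right s 0) (le_max_right t 0) (max_le_max hst le_rfl)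
    have hbdd : BddBelow (Set.range J) := by
      refine ⟨0, ?_⟩
      rintro y ⟨t, rfl⟩
      exact (hIv _ (le_max_right _ _)).1
    have hJt := tendsto_atTop_ciInf hJanti hbdd
    refine ⟨⨅ t, J t, hJt.congr' ?_⟩
    filter_upwards [eventually_ge_atTop (0:ℝ)] with t ht
    simp [hJ, max_eq_left ht]
  · -- Part 3
    intro η hS' hη0 hI0 hd0
    rw [Metric.tendsto_atTop]
    intro ε hε
    set δ : ℝ := ε / 2 with hδ
    have hδ0 : 0 < δ := by positivity
    -- β I S → 0
    have hBIS : Tendsto (fun t => β * I t * S t) atTop (nhds 0) := by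
      apply squeeze_zero' (g := fun t => β * I t)
      · filter_upwards [eventually_ge_atTop (0:ℝ)] with t ht
        have := (hIv t ht).1; have := (hSv t ht).1; positivity
      · filter_upwards [eventually_ge_atTop (0:ℝ)] with t ht
        have h1 := (hIv t ht).1
        have h2 := (hSv t ht).2
        exact mul_le_of_le_one_right (mul_nonneg hβ.le h1) h2
      · have := hI0.const_mul β
        simpa using this
    have hcomb : Tendsto (fun t => β * I t * S t - η t) atTop (nhds 0) := by
      simpa using hBIS.sub hη0
    have hev : ∀ᶠ t in atTop, β * I t * S t - η t < d * δ :=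
      hcomb.eventually_lt_const (by positivity)
    obtain ⟨T₀, hT₀⟩ := (hev.and (eventually_ge_atTop (0:ℝ))).exists_forall_of_atTop
    set T : ℝ := max T₀ 0 with hTdef
    have hT0 : (0:ℝ) ≤ T := le_max_right _ _
    have hTprop : ∀ t ≥ T, β * I t * S t - η t < d * δ ∧ 0 ≤ t := by
      intro t ht
      exact ⟨(hT₀ t (le_trans (le_max_left _ _) ht)).1, le_trans hT0 ht⟩
    -- the auxiliary monotone function
    set F : ℝ → ℝ := fun t => Real.exp (d * t) * (S t - 1 + δ) with hF
    have hFd : ∀ t ≥ T, HasDerivAt F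
        (d * Real.exp (d * t) * (S t - 1 + δ)
          + Real.exp (d * t) * (d * (1 - S t) - β * I t * S t + η t)) t := by
      intro t ht
      have h1 : HasDerivAt (fun t : ℝ => Real.exp (d * t)) (d * Real.exp (d * t)) t := by
        have := (Real.hasDerivAt_exp (d * t)).comp t ((hasDerivAt_id t).const_mul d)
        simpa [mul_comm, Function.comp_def] using this
      have h2 : HasDerivAt (fun t => S t - 1 + δ)
          (d * (1 - S t) - β * I t * S t + η t) t := by
        simpa using ((hS' t (hTprop t ht).2).sub_const 1).add_const δ
      exact h1.mul h2
    have hFmono : MonotoneOn F (Set.Ici T) := by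
      apply monotoneOn_of_deriv_nonneg (convex_Ici T)
      · exact fun x hx => ((hFd x hx).continuousAt).continuousWithinAt
      · rw [interior_Ici]
        exact fun x hx => ((hFd x (le_of_lt hx)).differentiableAt).differentiableWithinAt
      · rw [interior_Ici]
        intro x hx
        rw [(hFd x (le_of_lt hx)).deriv]
        have hx' := hTprop x (le_of_lt hx)
        have hexp : 0 < Real.exp (d * x) := Real.exp_pos _
        have key : β * I x * S x - η x ≤ d * δ := le_of_lt hx'.1
        nlinarith [hexp]
    -- key pointwise lower bound
    have hlow : ∀ t ≥ T, 1 - S t ≤ δ + Real.exp (d * (T - t)) := by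
      intro t ht
      have h1 : F T ≤ F t := hFmono (self_mem_Ici) (by exact ht) ht
      have hST := (hSv T hT0).1
      have h2 : -Real.exp (d * T) ≤ F T := by
        have : (-1 : ℝ) ≤ S T - 1 + δ := by linarith
        have hexp : 0 < Real.exp (d * T) := Real.exp_pos _
        simp only [hF]
        nlinarith
      have h3 : -Real.exp (d * T) ≤ Real.exp (d * t) * (S t - 1 + δ) := le_trans h2 h1
      have hexp_t : 0 < Real.exp (d * t) := Real.exp_pos _
      have h4 : -(Real.exp (d * T) / Real.exp (d * t)) ≤ S t - 1 + δ := by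
        rw [← neg_div, div_le_iff₀ hexp_t]
        nlinarith [h3]
      have h5 : Real.exp (d * T) / Real.exp (d * t) = Real.exp (d * (T - t)) := by
        rw [← Real.exp_sub]; ring_nf
      rw [h5] at h4
      linarith
    -- exp term tends to 0
    have hexp0 : Tendsto (fun t => Real.exp (d * (T - t))) atTop (nhds 0) := by
      apply Real.tendsto_exp_atBot.comp
      have h1 : Tendsto (fun t : ℝ => d * t) atTop atTop :=
        Tendsto.const_mul_atTop hd0 tendsto_id
      have h2 : Tendsto (fun t : ℝ => -(d * t)) atTop atBot :=
        tendsto_neg_atTop_atBot.comp h1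
      have h3 : Tendsto (fun t : ℝ => d * T + -(d * t)) atTop atBot :=
        tendsto_atBot_add_const_left atTop (d * T) h2
      refine h3.congr (fun t => by ring)
    have hexp_small : ∀ᶠ t in atTop, Real.exp (d * (T - t)) < δ :=
      hexp0.eventually_lt_const hδ0
    obtain ⟨T₁, hT₁⟩ := hexp_small.exists_forall_of_atTop
    refine ⟨max T T₁, fun t ht => ?_⟩
    have htT : T ≤ t := le_trans (le_max_left _ _) ht
    have htT₁ : T₁ ≤ t := le_trans (le_max_right _ _) ht
    have h1 := hlow t htT
    have h2 := hT₁ t htT₁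
    have hSt := hSv t (le_trans hT0 htT)
    rw [Real.dist_eq, abs_of_nonpos (by linarith [hSt.2])]
    simp only [hδ] at h1 h2
    linarith
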